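/- Let P ∈ ℝⁿˣⁿ, Q ∈ ℝᵐˣᵐ be symmetric positive semi-definite, T ∈ ℝⁿˣⁿ, R ∈ ℝᵐˣⁿ. If (x ⊕ y)ᵀ lies in E†([[P,Rᵀ],[R,Q]]) (reverse form), then (Tx ⊕ y) lies in E†([[TPTᵀ, TRᵀ],[RTᵀ, Q]]). -/

import Mathlib

open Matrix

theorem partial_update_reverse (n m : ℕ)
    (P : Matrix (Fin n) (Fin n) ℝ) (Q : Matrix (Fin m) (Fin m) ℝ)
    (hP : P.PosSemidef) (hQ : Q.PosSemidef)
    (T : Matrix (Fin n) (Fin n) ℝ) (R : Matrix (Fin m) (Fin n) ℝ)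
    (x : Fin n → ℝ) (y : Fin m → ℝ)
    (hxy : (Matrix.fromBlocks (1 : Matrix (Fin 1) (Fin 1) ℝ)
      (Matrix.replicateRow (Fin 1) (Sum.elim x y)) (Matrix.replicateCol (Fin 1) (Sum.elim x y))
      (Matrix.fromBlocks P Rᵀ R Q)).PosSemidef) :
    (Matrix.fromBlocks (1 : Matrix (Fin 1) (Fin 1) ℝ)
      (Matrix.replicateRow (Fin 1) (Sum.elim (T.mulVec x) y))
      (Matrix.replicateCol (Fin 1) (Sum.elim (T.mulVec x) y))
      (Matrix.fromBlocks (T * P * Tᵀ) (T * Rᵀ) (R * Tᵀ) Q)).PosSemidef := by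
  have h := hxy.mul_mul_conjTranspose_same
    (Matrix.fromBlocks (1 : Matrix (Fin 1) (Fin 1) ℝ) 0 0 (Matrix.fromBlocks T 0 0 (1 : Matrix (Fin m) (Fin m) ℝ)))
  convert h using 1
  simp [Matrix.fromBlocks_conjTranspose, Matrix.fromBlocks_transpose, Matrix.fromBlocks_multiply, Matrix.mul_assoc]
  constructor
  · ext i j
    cases j <;> simp [Matrix.mul_apply, Matrix.mulVec, dotProduct, mul_comm, Matrix.one_apply, Finset.sum_ite_eq, Finset.sum_ite_eq']
  · ext i j
    cases i <;> simp [Matrix.mul_apply, Matrix.mulVec, dotProduct, Matrix.one_apply, Finset.sum_ite_eq, Finset.sum_ite_eq']
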